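/- Let G be a tdlc group, H ≤ Aut(G) flat, ρ: H → ℤ a surjective homomorphism, and U a compact open subgroup tidy for H. Then Û_ρ := ⋃_{α ∈ H} α(U_ρ) is a closed subgroup of G, where U_ρ = ⋂{α(U) : α ∈ H, ρ(α) ≥ 0}. -/

import Mathlib

open scoped Pointwise

namespace TdlcFlat

variable {G : Type*} [Group G] [TopologicalSpace G] [IsTopologicalGroup G]

/-- The image α(U) of a subgroup U under an automorphism α of G. -/
def smap (α : MulAut G) (U : Subgroup G) : Subgroup G :=
  U.map α.toMonoidHom

/-- U_{α+} = ⋂_{n ≥ 0} αⁿ(U). -/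
def Uplus (α : MulAut G) (U : Subgroup G) : Subgroup G :=
  ⨅ n : ℕ, smap (α ^ n) U

/-- U_{α−} = ⋂_{n ≥ 0} α⁻ⁿ(U). -/
def Uminus (α : MulAut G) (U : Subgroup G) : Subgroup G :=
  ⨅ n : ℕ, smap (α⁻¹ ^ n) U

/-- U is tidy for α: (TA) U = U_{α+} U_{α−} and (TB) ⋃_{n≥0} α⁻ⁿ(U_{α−}) is closed. -/
def IsTidyFor (α : MulAut G) (U : Subgroup G) : Prop :=
  (U : Set G) = (Uplus α U : Set G) * (Uminus α U : Set G) ∧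
    IsClosed (⋃ n : ℕ, (smap (α⁻¹ ^ n) (Uminus α U) : Set G))

/-- U is a compact open subgroup of G. -/
def IsCompactOpen (U : Subgroup G) : Prop :=
  IsCompact (U : Set G) ∧ IsOpen (U : Set G)

/-- U is tidy for the group of automorphisms H: it is tidy for every α ∈ H.
(H is flat precisely when some compact open subgroup is tidy for H.) -/
def IsTidyForGroup (H : Subgroup (MulAut G)) (U : Subgroup G) : Prop :=
  ∀ α ∈ H, IsTidyFor α U

/-- U_{H0} = ⋂_{α ∈ H} α(U). -/
def UH0 (H : Subgroup (MulAut G)) (U : Subgroup G) : Subgroup G :=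
  ⨅ α : H, smap (α : MulAut G) U

/-- E is a U-eigenfactor of H: E ≤ U, each α ∈ H has α(E) ≤ E or α(E) ≥ E,
and E = ⋂ {α(U) : α ∈ H, α(E) ≥ E}. -/
def IsEigenfactor (H : Subgroup (MulAut G)) (U E : Subgroup G) : Prop :=
  E ≤ U ∧ (∀ α ∈ H, smap α E ≤ E ∨ E ≤ smap α E) ∧
    E = ⨅ (α : H) (_ : E ≤ smap (α : MulAut G) E), smap (α : MulAut G) U

end TdlcFlat

namespace TdlcFlat

variable {G : Type*} [Group G] [TopologicalSpace G] [IsTopologicalGroup G]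

/-- U_ρ = ⋂ {α(U) : α ∈ H, ρ(α) ≥ 0}. -/
def Urho (H : Subgroup (MulAut G)) (ρ : H → ℤ) (U : Subgroup G) : Subgroup G :=
  ⨅ (α : H) (_ : 0 ≤ ρ α), smap (α : MulAut G) U

end TdlcFlat

/-! ### Auxiliary lemmas -/

namespace TdlcFlat

variable {G : Type*} [Group G] [TopologicalSpace G] [IsTopologicalGroup G]

theorem mem_smap {α : MulAut G} {S : Subgroup G} {x : G} :
    x ∈ smap α S ↔ α⁻¹ x ∈ S := by
  simp only [smap, Subgroup.mem_map, MulEquiv.coe_toMonoidHom]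
  constructor
  · rintro ⟨y, hy, rfl⟩
    simpa [MulAut.inv_apply_self] using hy
  · intro h
    exact ⟨α⁻¹ x, h, MulAut.apply_inv_self G α x⟩

theorem pow_apply_add (τ : MulAut G) (m n : ℕ) (z : G) :
    (τ ^ (m + n)) z = (τ ^ n) ((τ ^ m) z) := by
  rw [add_comm, pow_add, MulAut.mul_apply]

theorem continuous_pow_apply (τ : MulAut G) (h : Continuous ⇑τ) (n : ℕ) :
    Continuous ⇑(τ ^ n) := by
  induction n with
  | zero =>
      have h0 : ⇑(τ ^ 0) = id := by funext z; simp
      rw [h0]; exact continuous_id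
  | succ n ih =>
      have h0 : ⇑(τ ^ (n + 1)) = ⇑(τ ^ n) ∘ ⇑τ := by
        funext z; rw [pow_succ, MulAut.mul_apply]; rfl
      rw [h0]; exact ih.comp h

theorem mem_Uminus_iff {τ : MulAut G} {U : Subgroup G} {z : G} :
    z ∈ Uminus τ U ↔ ∀ k : ℕ, (τ ^ k) z ∈ U := by
  simp only [Uminus, Subgroup.mem_iInf, mem_smap, inv_pow, inv_inv]

theorem mem_Uplus_iff {τ : MulAut G} {U : Subgroup G} {z : G} :
    z ∈ Uplus τ U ↔ ∀ k : ℕ, (τ⁻¹ ^ k) z ∈ U := by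
  simp only [Uplus, Subgroup.mem_iInf, mem_smap, inv_pow]

/-- Forward-orbit set: `z` with `τ^j z ∈ U` for all `j ≥ n`. -/
def fwdSet (τ : MulAut G) (U : Subgroup G) (n : ℕ) : Set G :=
  {z : G | ∀ k : ℕ, (τ ^ (n + k)) z ∈ U}

/-- Backward-orbit set: `z` with `τ⁻ʲ z ∈ U` for all `j ≥ 0`. -/
def bwdSet (τ : MulAut G) (U : Subgroup G) : Set G :=
  {z : G | ∀ k : ℕ, (τ⁻¹ ^ k) z ∈ U}

theorem mem_fwdSet {τ : MulAut G} {U : Subgroup G} {n : ℕ} {z : G} :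
    z ∈ fwdSet τ U n ↔ ∀ k : ℕ, (τ ^ (n + k)) z ∈ U := Iff.rfl

theorem mem_bwdSet {τ : MulAut G} {U : Subgroup G} {z : G} :
    z ∈ bwdSet τ U ↔ ∀ k : ℕ, (τ⁻¹ ^ k) z ∈ U := Iff.rfl

/-- Core lemma: if TB holds for `τ` then
`U₊ ∩ ⋃ₙ τ⁻ⁿ(U₋) ⊆ U₋`, phrased pointwise via orbits. -/
theorem lcore [LocallyCompactSpace G] [T2Space G]
    (τ : MulAut G) (hτ : Continuous ⇑τ) (hτi : Continuous ⇑τ⁻¹)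
    (U : Subgroup G) (hUc : IsCompact (U : Set G)) (hUcl : IsClosed (U : Set G))
    (hTB : IsClosed (⋃ n : ℕ, (smap (τ⁻¹ ^ n) (Uminus τ U) : Set G)))
    (x : G) (hp : ∀ k : ℕ, (τ⁻¹ ^ k) x ∈ U)
    (hm : ∃ N : ℕ, ∀ k : ℕ, (τ ^ (N + k)) x ∈ U) :
    ∀ k : ℕ, (τ ^ k) x ∈ U := by
  classical
  set A : Set G := bwdSet τ U ∩ ⋃ n, fwdSet τ U n with hA
  have hMscoe : ∀ n : ℕ,
      ((smap (τ⁻¹ ^ n) (Uminus τ U) : Subgroup G) : Set G) = fwdSet τ U n := by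
    intro n
    ext z
    simp only [SetLike.mem_coe, mem_smap, inv_pow, inv_inv, mem_Uminus_iff, mem_fwdSet]
    constructor
    · intro h k; rw [pow_apply_add]; exact h k
    · intro h k; have h2 := h k; rwa [pow_apply_add] at h2
  have hMsmono : ∀ {m n : ℕ}, m ≤ n → fwdSet τ U m ⊆ fwdSet τ U n := by
    intro m n hmn z hz
    obtain ⟨d, rfl⟩ := Nat.exists_eq_add_of_le hmn
    intro k
    have h2 := hz (d + k)
    rwa [← add_assoc] at h2
  have hMmul : ∀ (n : ℕ) {a b : G}, a ∈ fwdSet τ U n → b ∈ fwdSet τ U n →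
      a * b ∈ fwdSet τ U n := by
    intro n a b ha hb k
    rw [map_mul]
    exact mul_mem (ha k) (hb k)
  have hMinv : ∀ (n : ℕ) {a : G}, a ∈ fwdSet τ U n → a⁻¹ ∈ fwdSet τ U n := by
    intro n a ha k
    rw [map_inv]
    exact inv_mem (ha k)
  have hAmul : ∀ {a b : G}, a ∈ A → b ∈ A → a * b ∈ A := by
    intro a b ha hb
    obtain ⟨ha1, ha2⟩ := ha
    obtain ⟨hb1, hb2⟩ := hb
    obtain ⟨n, hn⟩ := Set.mem_iUnion.1 ha2
    obtain ⟨m, hmm⟩ := Set.mem_iUnion.1 hb2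
    refine ⟨fun k => ?_, Set.mem_iUnion.2 ⟨max n m, ?_⟩⟩
    · rw [map_mul]; exact mul_mem (ha1 k) (hb1 k)
    · exact hMmul _ (hMsmono (le_max_left n m) hn) (hMsmono (le_max_right n m) hmm)
  have hAinv : ∀ {a : G}, a ∈ A → a⁻¹ ∈ A := by
    intro a ha
    obtain ⟨ha1, ha2⟩ := ha
    obtain ⟨n, hn⟩ := Set.mem_iUnion.1 ha2
    refine ⟨fun k => ?_, Set.mem_iUnion.2 ⟨n, hMinv _ hn⟩⟩
    rw [map_inv]; exact inv_mem (ha1 k)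
  have hMscl : ∀ n : ℕ, IsClosed (fwdSet τ U n) := by
    intro n
    have h1 : fwdSet τ U n = ⋂ k : ℕ, (fun z => (τ ^ (n + k)) z) ⁻¹' (U : Set G) := by
      ext z
      simp only [mem_fwdSet, Set.mem_iInter, Set.mem_preimage, SetLike.mem_coe]
    rw [h1]
    exact isClosed_iInter fun k => hUcl.preimage (continuous_pow_apply τ hτ (n + k))
  have hPscl : IsClosed (bwdSet τ U) := by
    have h1 : bwdSet τ U = ⋂ k : ℕ, (fun z => (τ⁻¹ ^ k) z) ⁻¹' (U : Set G) := by
      ext z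
      simp only [mem_bwdSet, Set.mem_iInter, Set.mem_preimage, SetLike.mem_coe]
    rw [h1]
    exact isClosed_iInter fun k => hUcl.preimage (continuous_pow_apply τ⁻¹ hτi k)
  have hAcl : IsClosed A := by
    have h2 : (⋃ n, fwdSet τ U n)
        = ⋃ n : ℕ, ((smap (τ⁻¹ ^ n) (Uminus τ U) : Subgroup G) : Set G) :=
      (Set.iUnion_congr hMscoe).symm
    rw [hA, h2]
    exact hPscl.inter hTB
  have hAsubU : A ⊆ (U : Set G) := by
    intro z hz
    have h2 := hz.1 0
    simpa using h2
  have hAc : IsCompact A := hUc.of_isClosed_subset hAcl hAsubU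
  have hxA : x ∈ A := by
    obtain ⟨N, hN⟩ := hm
    exact ⟨hp, Set.mem_iUnion.2 ⟨N, hN⟩⟩
  -- Baire category on the compact set A
  haveI : CompactSpace A := isCompact_iff_compactSpace.mp hAc
  haveI : Nonempty A := ⟨⟨x, hxA⟩⟩
  obtain ⟨N₀, hN₀⟩ := nonempty_interior_of_iUnion_of_closed
      (f := fun n : ℕ => (Subtype.val ⁻¹' fwdSet τ U n : Set A))
      (fun n => (hMscl n).preimage continuous_subtype_val)
      (by
        ext z
        simp only [Set.mem_iUnion, Set.mem_preimage, Set.mem_univ, iff_true]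
        exact Set.mem_iUnion.1 z.2.2)
  obtain ⟨a₀, ha₀⟩ := hN₀
  have h2 : (Subtype.val ⁻¹' fwdSet τ U N₀ : Set A) ∈ nhds a₀ :=
    Filter.mem_of_superset ((isOpen_interior).mem_nhds ha₀) interior_subset
  obtain ⟨t, ht, hts⟩ := (mem_nhds_subtype A a₀ _).1 h2
  obtain ⟨O, hOt, hOopen, haO⟩ := mem_nhds_iff.1 ht
  have hlocal : ∀ z ∈ A, z ∈ O → z ∈ fwdSet τ U N₀ := by
    intro z hzA hzO
    exact hts (hOt hzO : ((⟨z, hzA⟩ : A) : G) ∈ t)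
  set a : G := (a₀ : G) with ha
  have haA : a ∈ A := a₀.2
  have haMs : a ∈ fwdSet τ U N₀ := hlocal a haA haO
  -- extract a uniform level via compactness
  have hWopen : ∀ b : A, IsOpen ((fun z => a * (↑b)⁻¹ * z) ⁻¹' O) :=
    fun b => hOopen.preimage (continuous_mul_left _)
  have hcover : A ⊆ ⋃ b : A, (fun z => a * (↑b)⁻¹ * z) ⁻¹' O := by
    intro z hz
    refine Set.mem_iUnion.2 ⟨⟨z, hz⟩, ?_⟩
    show a * z⁻¹ * z ∈ O
    rwa [inv_mul_cancel_right]
  obtain ⟨t₀, ht₀⟩ := hAc.elim_finite_subcover _ hWopen hcover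
  have hblevel : ∀ b : A, ∃ n, (b : G) ∈ fwdSet τ U n := fun b => Set.mem_iUnion.1 b.2.2
  set K : ℕ := max N₀ (t₀.sup fun b => (hblevel b).choose) with hK
  have hglobal : ∀ z ∈ A, z ∈ fwdSet τ U K := by
    intro z hz
    obtain ⟨b, hbt, hzW⟩ := Set.mem_iUnion₂.1 (ht₀ hz)
    have hoA : a * (↑b)⁻¹ * z ∈ A := hAmul (hAmul haA (hAinv b.2)) hz
    have hoM : a * (↑b)⁻¹ * z ∈ fwdSet τ U N₀ := hlocal _ hoA hzW
    have h1 : (↑b : G)⁻¹ * z ∈ fwdSet τ U N₀ := by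
      have h3 := hMmul N₀ (hMinv N₀ haMs) hoM
      rwa [show a⁻¹ * (a * (↑b)⁻¹ * z) = (↑b : G)⁻¹ * z by group] at h3
    have h4 : (↑b : G) ∈ fwdSet τ U ((hblevel b).choose) := (hblevel b).choose_spec
    have h5 : z = ↑b * ((↑b : G)⁻¹ * z) := by group
    rw [h5]
    refine hMmul K (hMsmono ?_ h4) (hMsmono (le_max_left _ _) h1)
    rw [hK]
    exact le_trans (Finset.le_sup (f := fun b => (hblevel b).choose) hbt) (le_max_right _ _)
  -- descend from level K to level 0
  have hdown : ∀ m : ℕ, (∀ z ∈ A, z ∈ fwdSet τ U (m + 1)) → ∀ z ∈ A, z ∈ fwdSet τ U m := by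
    intro m hstep z hz
    have hz' : τ⁻¹ z ∈ A := by
      refine ⟨fun k => ?_, ?_⟩
      · have h6 := hz.1 (k + 1)
        rwa [pow_succ, MulAut.mul_apply] at h6
      · obtain ⟨n, hn⟩ := Set.mem_iUnion.1 hz.2
        refine Set.mem_iUnion.2 ⟨n + 1, fun k => ?_⟩
        have h7 : (τ ^ (n + 1 + k)) (τ⁻¹ z) = (τ ^ (n + k)) z := by
          rw [show n + 1 + k = (n + k) + 1 by omega, pow_succ, MulAut.mul_apply,
            MulAut.apply_inv_self]
        rw [h7]
        exact hn k
    intro k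
    have h8 := hstep _ hz' k
    rwa [show m + 1 + k = (m + k) + 1 by omega, pow_succ, MulAut.mul_apply,
      MulAut.apply_inv_self] at h8
  have hall : ∀ z ∈ A, z ∈ fwdSet τ U 0 := by
    have base : ∀ m : ℕ, (∀ z ∈ A, z ∈ fwdSet τ U m) → ∀ z ∈ A, z ∈ fwdSet τ U 0 := by
      intro m
      induction m with
      | zero => exact fun h => h
      | succ m ih => exact fun h => ih (hdown m h)
    exact base K hglobal
  intro k
  have h9 := hall x hxA k
  rwa [zero_add] at h9

/-- Willis' lemma: for `U` tidy for `τ` (and `τ⁻¹`), `U ∩ τᴺ(U₊) ⊆ U₊`, pointwise. -/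
theorem l1 [LocallyCompactSpace G] [T2Space G]
    (τ : MulAut G) (hτ : Continuous ⇑τ) (hτi : Continuous ⇑τ⁻¹)
    (U : Subgroup G) (hUc : IsCompact (U : Set G)) (hUcl : IsClosed (U : Set G))
    (hTA : (U : Set G) = (Uplus τ U : Set G) * (Uminus τ U : Set G))
    (hTB2 : IsClosed (⋃ n : ℕ, (smap (τ⁻¹⁻¹ ^ n) (Uminus τ⁻¹ U) : Set G)))
    (x : G) (hxU : x ∈ U) (N : ℕ) (hxN : ∀ k : ℕ, (τ⁻¹ ^ (N + k)) x ∈ U) :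
    ∀ k : ℕ, (τ⁻¹ ^ k) x ∈ U := by
  have hx' : x ∈ (Uplus τ U : Set G) * (Uminus τ U : Set G) := by
    rw [← hTA]; exact hxU
  obtain ⟨aa, haa, bb, hbb, rfl⟩ := Set.mem_mul.1 hx'
  have hap : ∀ k : ℕ, (τ⁻¹ ^ k) aa ∈ U := mem_Uplus_iff.1 haa
  have hbm : ∀ k : ℕ, (τ ^ k) bb ∈ U := mem_Uminus_iff.1 hbb
  have hb2 : ∀ k : ℕ, (τ⁻¹ ^ (N + k)) bb ∈ U := by
    intro k
    have h1 : bb = aa⁻¹ * (aa * bb) := by group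
    rw [h1, map_mul, map_inv]
    exact mul_mem (inv_mem (hap (N + k))) (hxN k)
  have hbp : ∀ k : ℕ, (τ⁻¹ ^ k) bb ∈ U := by
    refine lcore τ⁻¹ hτi (by rw [inv_inv]; exact hτ) U hUc hUcl hTB2 bb ?_ ⟨N, hb2⟩
    intro k
    rw [inv_inv]
    exact hbm k
  intro k
  rw [map_mul]
  exact mul_mem (hap k) (hbp k)

/-- A subgroup whose intersection with an open subgroup is closed is closed. -/
theorem closed_of_closed_inter (K U : Subgroup G) (hUo : IsOpen (U : Set G))
    (h : IsClosed ((K : Set G) ∩ (U : Set G))) : IsClosed (K : Set G) := by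
  refine isClosed_of_closure_subset fun x hx => ?_
  have hOopen : IsOpen ((fun z => x⁻¹ * z) ⁻¹' (U : Set G)) :=
    hUo.preimage (continuous_mul_left x⁻¹)
  have hxO : x ∈ (fun z => x⁻¹ * z) ⁻¹' (U : Set G) := by
    simp only [Set.mem_preimage, inv_mul_cancel, SetLike.mem_coe]
    exact one_mem U
  obtain ⟨s, hsO, hsK⟩ := mem_closure_iff.1 hx _ hOopen hxO
  have hsK' : s ∈ K := hsK
  have hsO' : x⁻¹ * s ∈ U := hsO
  have himg : (fun z => s⁻¹ * z) '' (K : Set G) = (K : Set G) := by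
    ext z
    constructor
    · rintro ⟨w, hw, rfl⟩
      exact mul_mem (inv_mem hsK') hw
    · intro hz
      exact ⟨s * z, mul_mem hsK' hz, by simp⟩
  have hy : s⁻¹ * x ∈ closure (K : Set G) := by
    have h1 : s⁻¹ * x ∈ ⇑(Homeomorph.mulLeft s⁻¹) '' closure (K : Set G) := ⟨x, hx, rfl⟩
    rw [Homeomorph.image_closure] at h1
    have h2 : ⇑(Homeomorph.mulLeft s⁻¹) '' (K : Set G) = (K : Set G) := himg
    rwa [h2] at h1
  have hyU : s⁻¹ * x ∈ (U : Set G) := by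
    have h3 : (x⁻¹ * s)⁻¹ ∈ U := inv_mem hsO'
    rwa [mul_inv_rev, inv_inv] at h3
  have hy2 : s⁻¹ * x ∈ closure ((K : Set G) ∩ (U : Set G)) := by
    rw [mem_closure_iff]
    intro o ho hyo
    obtain ⟨w, hwo, hwK⟩ := mem_closure_iff.1 hy (o ∩ (U : Set G)) (ho.inter hUo) ⟨hyo, hyU⟩
    exact ⟨w, hwo.1, hwK, hwo.2⟩
  rw [h.closure_eq] at hy2
  have h4 : x = s * (s⁻¹ * x) := by rw [mul_inv_cancel_left]
  rw [h4]
  exact mul_mem hsK' hy2.1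

end TdlcFlat


open TdlcFlat in
/-- Let G be a tdlc group, H ≤ Aut(G) flat, ρ : H → ℤ a
surjective homomorphism and U a compact open subgroup tidy for H. Then
Û_ρ = ⋃_{α ∈ H} α(U_ρ) is a closed subgroup of G. -/
theorem Urho_hat_closed_subgroup
    {G : Type*} [Group G] [TopologicalSpace G] [IsTopologicalGroup G]
    [LocallyCompactSpace G] [TotallyDisconnectedSpace G]
    (H : Subgroup (MulAut G))
    (hcont : ∀ α ∈ H, Continuous ⇑α)
    (ρ : H → ℤ) (hhom : ∀ a b : H, ρ (a * b) = ρ a + ρ b)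
    (hsurj : Function.Surjective ρ)
    (U : Subgroup G) (hU : IsCompactOpen U) (htidy : IsTidyForGroup H U) :
    ∃ K : Subgroup G,
      (K : Set G) = (⋃ α : H, (smap (α : MulAut G) (Urho H ρ U) : Set G)) ∧
        IsClosed (K : Set G) := by
  obtain ⟨hUc, hUo⟩ := hU
  haveI : T1Space G := ⟨fun x => by
    rw [← (totallyDisconnectedSpace_iff_connectedComponent_singleton.mp inferInstance x)]
    exact isClosed_connectedComponent⟩
  haveI : T2Space G := inferInstance
  have hUcl : IsClosed (U : Set G) := U.isClosed_of_isOpen hUo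
  -- arithmetic of ρ
  have hrho1 : ρ 1 = 0 := by
    have h := hhom 1 1
    rw [mul_one] at h
    omega
  have hrhoinv : ∀ α : H, ρ α⁻¹ = -ρ α := by
    intro α
    have h := hhom α⁻¹ α
    rw [inv_mul_cancel, hrho1] at h
    omega
  have hrhopow : ∀ (α : H) (n : ℕ), ρ (α ^ n) = n * ρ α := by
    intro α n
    induction n with
    | zero => rw [pow_zero, hrho1]; push_cast; ring
    | succ n ih => rw [pow_succ, hhom, ih]; push_cast; ring
  -- the filtration V n = ⋂ {δ(U) : ρ(δ) ≥ n}
  set V : ℤ → Subgroup G := fun n => ⨅ (δ : H) (_ : n ≤ ρ δ), smap (δ : MulAut G) U with hV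
  have memV : ∀ {n : ℤ} {x : G},
      x ∈ V n ↔ ∀ δ : H, n ≤ ρ δ → x ∈ smap (δ : MulAut G) U := by
    intro n x
    simp [hV, Subgroup.mem_iInf]
  have memUrho : ∀ {x : G},
      x ∈ Urho H ρ U ↔ ∀ δ : H, 0 ≤ ρ δ → x ∈ smap (δ : MulAut G) U := by
    intro x
    simp [Urho, Subgroup.mem_iInf]
  have hVmono : ∀ {m n : ℤ}, m ≤ n → ∀ {x : G}, x ∈ V m → x ∈ V n := by
    intro m n hmn x hx
    exact memV.2 fun δ hδ => memV.1 hx δ (le_trans hmn hδ)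
  have hsmapUrho : ∀ α : H, smap (α : MulAut G) (Urho H ρ U) = V (ρ α) := by
    intro α
    ext x
    rw [mem_smap]
    constructor
    · intro hx
      refine memV.2 fun δ hδ => ?_
      have h0 : (0 : ℤ) ≤ ρ (α⁻¹ * δ) := by rw [hhom, hrhoinv]; omega
      have h1 := memUrho.1 hx (α⁻¹ * δ) h0
      rw [mem_smap] at h1 ⊢
      have h2 : (((α⁻¹ * δ : H) : MulAut G))⁻¹ ((α : MulAut G)⁻¹ x)
          = (δ : MulAut G)⁻¹ x := by
        simp [mul_inv_rev, MulAut.mul_apply, MulAut.apply_inv_self]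
      rwa [h2] at h1
    · intro hx
      refine memUrho.2 fun δ hδ => ?_
      have h0 : ρ α ≤ ρ (α * δ) := by rw [hhom]; omega
      have h1 := memV.1 hx (α * δ) h0
      rw [mem_smap] at h1 ⊢
      have h2 : ((δ : MulAut G))⁻¹ ((α : MulAut G)⁻¹ x)
          = (((α * δ : H) : MulAut G))⁻¹ x := by
        simp [mul_inv_rev, MulAut.mul_apply]
      rw [h2]
      exact h1
  have key : ∀ (γ : H) (z : G),
      z ∈ (smap (γ : MulAut G) (Urho H ρ U) : Set G) ↔ z ∈ V (ρ γ) := by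
    intro γ z
    rw [SetLike.mem_coe, hsmapUrho γ]
  -- the subgroup structure on the union
  have hone : (1 : G) ∈ ⋃ α : H, (smap (α : MulAut G) (Urho H ρ U) : Set G) :=
    Set.mem_iUnion.2 ⟨1, one_mem _⟩
  have hinv : ∀ {a : G}, a ∈ (⋃ α : H, (smap (α : MulAut G) (Urho H ρ U) : Set G)) →
      a⁻¹ ∈ ⋃ α : H, (smap (α : MulAut G) (Urho H ρ U) : Set G) := by
    intro a ha
    obtain ⟨α, hα⟩ := Set.mem_iUnion.1 ha
    exact Set.mem_iUnion.2 ⟨α, inv_mem hα⟩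
  have hmul : ∀ {a b : G}, a ∈ (⋃ α : H, (smap (α : MulAut G) (Urho H ρ U) : Set G)) →
      b ∈ (⋃ α : H, (smap (α : MulAut G) (Urho H ρ U) : Set G)) →
      a * b ∈ ⋃ α : H, (smap (α : MulAut G) (Urho H ρ U) : Set G) := by
    intro a b ha hb
    obtain ⟨α, hα⟩ := Set.mem_iUnion.1 ha
    obtain ⟨β, hβ⟩ := Set.mem_iUnion.1 hb
    have hα' : a ∈ V (ρ α) := (key α a).1 hα
    have hβ' : b ∈ V (ρ β) := (key β b).1 hβ
    rcases le_total (ρ α) (ρ β) with h | h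
    · exact Set.mem_iUnion.2 ⟨β, (key β _).2 (mul_mem (hVmono h hα') hβ')⟩
    · exact Set.mem_iUnion.2 ⟨α, (key α _).2 (mul_mem hα' (hVmono h hβ'))⟩
  -- closedness of the pieces
  have hsmapcl : ∀ δ : H, IsClosed ((smap (δ : MulAut G) U : Subgroup G) : Set G) := by
    intro δ
    have h1 : ((smap (δ : MulAut G) U : Subgroup G) : Set G)
        = (fun z => ((δ : MulAut G))⁻¹ z) ⁻¹' (U : Set G) := by
      ext z
      simp [mem_smap]
    rw [h1]
    have hcd : Continuous fun z => ((δ : MulAut G))⁻¹ z := by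
      have h2 := hcont ↑(δ⁻¹) (δ⁻¹).2
      simpa using h2
    exact hUcl.preimage hcd
  have hV1cl : IsClosed ((V 1 : Subgroup G) : Set G) := by
    have h1 : ((V 1 : Subgroup G) : Set G)
        = ⋂ δ : H, ⋂ (_ : (1 : ℤ) ≤ ρ δ), ((smap (δ : MulAut G) U : Subgroup G) : Set G) := by
      ext z
      simp only [SetLike.mem_coe, Set.mem_iInter]
      exact memV
    rw [h1]
    exact isClosed_iInter fun δ => isClosed_iInter fun _ => hsmapcl δ
  -- Û ∩ U = V 1 ∩ U
  have hKU : (⋃ α : H, (smap (α : MulAut G) (Urho H ρ U) : Set G)) ∩ (U : Set G)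
      = ((V 1 : Subgroup G) : Set G) ∩ (U : Set G) := by
    ext x
    constructor
    · rintro ⟨hxK, hxU⟩
      refine ⟨?_, hxU⟩
      obtain ⟨α, hα⟩ := Set.mem_iUnion.1 hxK
      have hxV : x ∈ V (ρ α) := (key α x).1 hα
      refine SetLike.mem_coe.2 (memV.2 fun δ hδ => ?_)
      have hτ : Continuous ⇑(δ : MulAut G) := hcont _ δ.2
      have hτi : Continuous ⇑((δ : MulAut G))⁻¹ := by
        have h2 := hcont ↑(δ⁻¹) (δ⁻¹).2
        simpa using h2
      have hTA := (htidy ↑δ δ.2).1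
      have hTB2 := (htidy ↑(δ⁻¹) (δ⁻¹).2).2
      have hcoe : ((δ⁻¹ : H) : MulAut G) = ((δ : MulAut G))⁻¹ := by simp
      rw [hcoe] at hTB2
      have hres := l1 (δ : MulAut G) hτ hτi U hUc hUcl hTA hTB2 x
          (SetLike.mem_coe.1 hxU) ((ρ α).toNat) ?_
      · have h1 := hres 1
        rw [pow_one] at h1
        exact mem_smap.2 h1
      · intro k
        have hineq : ρ α ≤ ρ (δ ^ ((ρ α).toNat + k)) := by
          rw [hrhopow]
          calc ρ α ≤ ((ρ α).toNat : ℤ) := Int.self_le_toNat _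
            _ ≤ (((ρ α).toNat + k : ℕ) : ℤ) := by push_cast; omega
            _ ≤ (((ρ α).toNat + k : ℕ) : ℤ) * ρ δ :=
                le_mul_of_one_le_right (by positivity) hδ
        have hmem := memV.1 hxV (δ ^ ((ρ α).toNat + k)) hineq
        rw [mem_smap] at hmem
        rw [inv_pow]
        have hc : ((δ ^ ((ρ α).toNat + k) : H) : MulAut G)
            = ((δ : MulAut G)) ^ ((ρ α).toNat + k) := by
          simp
        rwa [hc] at hmem
    · rintro ⟨hxV, hxU⟩
      obtain ⟨β, hβ⟩ := hsurj 1
      refine ⟨Set.mem_iUnion.2 ⟨β, ?_⟩, hxU⟩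
      refine (key β x).2 ?_
      rw [hβ]
      exact SetLike.mem_coe.1 hxV
  -- assemble
  refine ⟨{ carrier := ⋃ α : H, (smap (α : MulAut G) (Urho H ρ U) : Set G)
            one_mem' := hone
            mul_mem' := hmul
            inv_mem' := hinv }, rfl, ?_⟩
  apply closed_of_closed_inter _ U hUo
  show IsClosed ((⋃ α : H, (smap (α : MulAut G) (Urho H ρ U) : Set G)) ∩ (U : Set G))
  rw [hKU]
  exact hV1cl.inter hUcl
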